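/- Let k be a field, R = k[x,y,z]/((x,y) ∩ (z)), and A = k[x+z, y] the subring of R generated by the images of x+z and y. For M = A/yA one has codim_A M = 1 but codim_R(R ⊗_A M) = 0. In particular, codimension can strictly drop under base change along an integral extension. -/

import Mathlib

/-!
STATEMENT 12: Let `k` be a field, `R = k[x,y,z]/((x,y) ∩ (z))` and
`A = k[u,v] → R` the (integral) map sending `u ↦ x+z`, `v ↦ y`.
For `M = A/(v)` one has `codim_A M = 1` while `codim_R (R ⊗_A M) = 0`:
codimension can strictly drop under base change along an integral extension.
-/

open TensorProduct MvPolynomial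

/-- The height of an ideal: the infimum of the heights of the primes containing it. -/
noncomputable def idealHeight {R : Type*} [CommRing R] (I : Ideal R) : ℕ∞ :=
  ⨅ (p : PrimeSpectrum R) (_ : I ≤ p.asIdeal), Order.height p

/-- The codimension of a module: the height of its annihilator ideal. -/
noncomputable def moduleCodim (R : Type*) [CommRing R] (M : Type*) [AddCommGroup M]
    [Module R M] : ℕ∞ :=
  idealHeight (Module.annihilator R M)

section Aux

variable {k : Type} [Field k]

private lemma aux_diff_mem_span {σ : Type} (s : Set (MvPolynomial σ k))
    (g : MvPolynomial σ k →+* MvPolynomial σ k)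
    (hC : ∀ a : k, g (C a) = C a)
    (hX : ∀ i, g (X i) = X i ∨ (g (X i) = 0 ∧ (X i : MvPolynomial σ k) ∈ Ideal.span s)) :
    ∀ f : MvPolynomial σ k, f - g f ∈ Ideal.span s := by
  intro f
  induction f using MvPolynomial.induction_on with
  | C a => rw [hC]; simp
  | add p q hp hq =>
      rw [map_add]
      have : p + q - (g p + g q) = (p - g p) + (q - g q) := by ring
      rw [this]; exact Ideal.add_mem _ hp hq
  | mul_X p i hp =>
      rw [map_mul]
      rcases hX i with h | ⟨h, hmem⟩
      · rw [h]
        have : p * X i - g p * X i = (p - g p) * X i := by ring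
        rw [this]; exact Ideal.mul_mem_right _ _ hp
      · rw [h, mul_zero, sub_zero]
        exact Ideal.mul_mem_left _ _ hmem

private noncomputable def rho3 (k : Type) [Field k] :
    MvPolynomial (Fin 3) k →+* MvPolynomial (Fin 1) k :=
  eval₂Hom C ![0, 0, X 0]

private lemma ker_rho3 :
    RingHom.ker (rho3 k) = (Ideal.span {X 0, X 1} : Ideal (MvPolynomial (Fin 3) k)) := by
  set ι : MvPolynomial (Fin 1) k →+* MvPolynomial (Fin 3) k := eval₂Hom C ![X 2] with hι
  have hC : ∀ a : k, (ι.comp (rho3 k)) (C a) = C a := by intro a; simp [rho3, hι]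
  have hX : ∀ i, (ι.comp (rho3 k)) (X i) = X i ∨
      ((ι.comp (rho3 k)) (X i) = 0 ∧
        (X i : MvPolynomial (Fin 3) k) ∈ Ideal.span {X 0, X 1}) := by
    intro i
    fin_cases i
    · exact Or.inr ⟨by simp [rho3, hι], Ideal.subset_span (by simp)⟩
    · exact Or.inr ⟨by simp [rho3, hι], Ideal.subset_span (by simp)⟩
    · exact Or.inl (by simp [rho3, hι])
  apply le_antisymm
  · intro f hf
    have h1 := aux_diff_mem_span {X 0, X 1} (ι.comp (rho3 k)) hC hX f
    have h2 : (ι.comp (rho3 k)) f = 0 := by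
      rw [RingHom.comp_apply, RingHom.mem_ker.mp hf, map_zero]
    rwa [h2, sub_zero] at h1
  · rw [Ideal.span_le]
    rintro x hx
    simp only [Set.mem_insert_iff, Set.mem_singleton_iff] at hx
    rcases hx with rfl | rfl <;>
      · rw [SetLike.mem_coe, RingHom.mem_ker]; simp [rho3]

private lemma span01_prime :
    (Ideal.span {X 0, X 1} : Ideal (MvPolynomial (Fin 3) k)).IsPrime :=
  ker_rho3 (k := k) ▸ RingHom.ker_isPrime _

private lemma X2_not_mem_span01 :
    (X 2 : MvPolynomial (Fin 3) k) ∉ (Ideal.span {X 0, X 1} : Ideal (MvPolynomial (Fin 3) k)) := by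
  intro h
  rw [← ker_rho3] at h
  have h2 : rho3 k (X 2) = 0 := RingHom.mem_ker.mp h
  have h3 : rho3 k (X 2) = X 0 := by simp [rho3]
  exact MvPolynomial.X_ne_zero _ (h3 ▸ h2)

private noncomputable def rho2 (k : Type) [Field k] :
    MvPolynomial (Fin 2) k →+* MvPolynomial (Fin 1) k :=
  eval₂Hom C ![X 0, 0]

private lemma ker_rho2 :
    RingHom.ker (rho2 k) = (Ideal.span {X 1} : Ideal (MvPolynomial (Fin 2) k)) := by
  set ι : MvPolynomial (Fin 1) k →+* MvPolynomial (Fin 2) k := eval₂Hom C ![X 0] with hι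
  have hC : ∀ a : k, (ι.comp (rho2 k)) (C a) = C a := by intro a; simp [rho2, hι]
  have hX : ∀ i, (ι.comp (rho2 k)) (X i) = X i ∨
      ((ι.comp (rho2 k)) (X i) = 0 ∧
        (X i : MvPolynomial (Fin 2) k) ∈ Ideal.span {X 1}) := by
    intro i
    fin_cases i
    · exact Or.inl (by simp [rho2, hι])
    · exact Or.inr ⟨by simp [rho2, hι], Ideal.subset_span rfl⟩
  apply le_antisymm
  · intro f hf
    have h1 := aux_diff_mem_span {X 1} (ι.comp (rho2 k)) hC hX f
    have h2 : (ι.comp (rho2 k)) f = 0 := by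
      rw [RingHom.comp_apply, RingHom.mem_ker.mp hf, map_zero]
    rwa [h2, sub_zero] at h1
  · rw [Ideal.span_le]
    rintro x hx
    simp only [Set.mem_singleton_iff] at hx
    subst hx
    rw [SetLike.mem_coe, RingHom.mem_ker]; simp [rho2]

private lemma prime_X1 : Prime (X 1 : MvPolynomial (Fin 2) k) :=
  (Ideal.span_singleton_prime (MvPolynomial.X_ne_zero _)).mp
    (ker_rho2 (k := k) ▸ RingHom.ker_isPrime _)

private lemma prime_lt_span_X1 (Q : Ideal (MvPolynomial (Fin 2) k)) (hQ : Q.IsPrime)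
    (hlt : Q < Ideal.span {X 1}) : Q = ⊥ := by
  by_contra hne
  obtain ⟨f, hfQ, hf0⟩ := Submodule.exists_mem_ne_zero_of_ne_bot hne
  have hX1 : Prime (X 1 : MvPolynomial (Fin 2) k) := prime_X1
  have key : ∀ g : MvPolynomial (Fin 2) k, g ≠ 0 → g ∈ Q →
      (X 1 : MvPolynomial (Fin 2) k) ∈ Q := by
    intro g
    induction g using WfDvdMonoid.induction_on_irreducible with
    | zero => intro h _; exact absurd rfl h
    | unit u hu => intro _ hmem; exact absurd (Q.eq_top_of_isUnit_mem hmem hu) hQ.ne_top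
    | mul a i ha hi IH =>
        intro _ hmem
        rcases hQ.mem_or_mem hmem with h | h
        · obtain ⟨c, hc⟩ := Ideal.mem_span_singleton.mp (hlt.le h)
          rcases hi.isUnit_or_isUnit hc with h1 | h1
          · exact absurd h1 hX1.not_unit
          · obtain ⟨u, rfl⟩ := h1
            have hXeq : (X 1 : MvPolynomial (Fin 2) k) = i * ↑u⁻¹ := by
              rw [hc, mul_assoc, Units.mul_inv, mul_one]
            rw [hXeq]
            exact Ideal.mul_mem_right _ _ h
        · exact IH ha h
  exact hlt.not_ge ((Ideal.span_singleton_le_iff_mem Q).mpr (key f hf0 hfQ))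

end Aux

theorem codim_drops_example (k : Type) [Field k] :
    ∀ (R : Type) (_ : CommRing R)
      (q : MvPolynomial (Fin 3) k →+* R) (_ : Function.Surjective q)
      (_ : RingHom.ker q =
        (Ideal.span {X 0, X 1} ⊓ Ideal.span {X 2} : Ideal (MvPolynomial (Fin 3) k))),
    ∀ (A : Type) (_ : CommRing A)
      (p : MvPolynomial (Fin 2) k →+* A) (_ : Function.Surjective p)
      (_ : RingHom.ker p = ⊥),
    -- the map `A → R`, `u ↦ x+z`, `v ↦ y`
    ∀ (φ : A →+* R)
      (_ : φ.comp p = q.comp (eval₂Hom MvPolynomial.C ![X 0 + X 2, X 1])),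
    -- `φ` is injective and integral
    Function.Injective φ ∧ φ.IsIntegral ∧
    -- and for `M = A ⧸ (v)` the codimensions are `1` and `0` respectively
    ∀ (M : Type) (_ : AddCommGroup M) (_ : Module A M)
      (e : M ≃ₗ[A] (A ⧸ Ideal.span {p (X 1)})),
      moduleCodim A M = 1 ∧
      (letI : Algebra A R := φ.toAlgebra
       moduleCodim R (R ⊗[A] M) = 0) := by
  intro R _ q hq hker A _ p hp hkerp φ hcomp
  set f : MvPolynomial (Fin 2) k →+* MvPolynomial (Fin 3) k :=
    eval₂Hom MvPolynomial.C ![X 0 + X 2, X 1] with hfdef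
  have hpinj : Function.Injective p := (RingHom.injective_iff_ker_eq_bot p).mpr hkerp
  have hφp : ∀ g, φ (p g) = q (f g) := fun g => by
    rw [← RingHom.comp_apply, hcomp, RingHom.comp_apply]
  have hfX0 : f (X 0) = X 0 + X 2 := by simp [hfdef]
  have hfX1 : f (X 1) = X 1 := by simp [hfdef]
  have hfC : ∀ a : k, f (C a) = C a := fun a => by simp [hfdef]
  -- injectivity of φ
  have hinj : Function.Injective φ := by
    rw [RingHom.injective_iff_ker_eq_bot, eq_bot_iff]
    intro a ha
    obtain ⟨g, rfl⟩ := hp a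
    have h1 : q (f g) = 0 := by rw [← hφp]; exact RingHom.mem_ker.mp ha
    have h2 : f g ∈ Ideal.span {(X 2 : MvPolynomial (Fin 3) k)} := by
      have : f g ∈ RingHom.ker q := RingHom.mem_ker.mpr h1
      rw [hker] at this
      exact this.2
    set ψ : MvPolynomial (Fin 3) k →+* MvPolynomial (Fin 2) k :=
      eval₂Hom MvPolynomial.C ![X 0, X 1, 0] with hψdef
    have hψf : ψ.comp f = RingHom.id _ := by
      apply MvPolynomial.ringHom_ext
      · intro a; simp [hψdef, hfdef]
      · intro i; fin_cases i <;> simp [hψdef, hfdef]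
    have h3 : ψ (f g) = 0 := by
      obtain ⟨c, hc⟩ := Ideal.mem_span_singleton'.mp h2
      rw [← hc, map_mul, show ψ (X 2) = 0 by simp [hψdef], mul_zero]
    have h4 : g = 0 := by
      have := congrArg (fun h : MvPolynomial (Fin 2) k →+* MvPolynomial (Fin 2) k => h g) hψf
      simp only [RingHom.comp_apply, RingHom.id_apply] at this
      rw [← this, h3]
    rw [h4, map_zero]
    exact Submodule.zero_mem ⊥
  letI : Algebra A R := φ.toAlgebra
  have halg : algebraMap A R = φ := rfl
  -- key relation x*z = 0 in R
  have hx0x2 : q (X 0) * q (X 2) = 0 := by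
    rw [← map_mul, ← RingHom.mem_ker, hker]
    exact ⟨Ideal.mul_mem_right _ _ (Ideal.subset_span (by simp)),
      Ideal.mul_mem_left _ _ (Ideal.subset_span rfl)⟩
  -- integrality of the generators
  have hqx0 : IsIntegral A (q (X 0)) := by
    refine ⟨(Polynomial.X - Polynomial.C (p (X 0))) * Polynomial.X,
      (Polynomial.monic_X_sub_C _).mul Polynomial.monic_X, ?_⟩
    have heval : Polynomial.eval₂ (algebraMap A R) (q (X 0))
        ((Polynomial.X - Polynomial.C (p (X 0))) * Polynomial.X)
        = (q (X 0) - φ (p (X 0))) * q (X 0) := by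
      simp [halg]
    rw [heval, hφp (X 0), hfX0, map_add]
    have : (q (X 0) - (q (X 0) + q (X 2))) * q (X 0) = -(q (X 0) * q (X 2)) := by ring
    rw [this, hx0x2, neg_zero]
  have hqx2 : IsIntegral A (q (X 2)) := by
    refine ⟨(Polynomial.X - Polynomial.C (p (X 0))) * Polynomial.X,
      (Polynomial.monic_X_sub_C _).mul Polynomial.monic_X, ?_⟩
    have heval : Polynomial.eval₂ (algebraMap A R) (q (X 2))
        ((Polynomial.X - Polynomial.C (p (X 0))) * Polynomial.X)
        = (q (X 2) - φ (p (X 0))) * q (X 2) := by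
      simp [halg]
    rw [heval, hφp (X 0), hfX0, map_add]
    have : (q (X 2) - (q (X 0) + q (X 2))) * q (X 2) = -(q (X 0) * q (X 2)) := by ring
    rw [this, hx0x2, neg_zero]
  have hqx1 : IsIntegral A (q (X 1)) := by
    have : q (X 1) = algebraMap A R (p (X 1)) := by rw [halg, hφp (X 1), hfX1]
    rw [this]
    exact isIntegral_algebraMap
  have hadj : ∀ r : R, r ∈ Algebra.adjoin A ({q (X 0), q (X 1), q (X 2)} : Set R) := by
    intro r
    obtain ⟨g, rfl⟩ := hq r
    induction g using MvPolynomial.induction_on with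
    | C a =>
        have : q (C a) = algebraMap A R (p (C a)) := by
          rw [halg, hφp (C a), hfC a]
        rw [this]
        exact Subalgebra.algebraMap_mem _ _
    | add g h hg hh => rw [map_add]; exact add_mem hg hh
    | mul_X g i hg =>
        rw [map_mul]
        exact mul_mem hg (Algebra.subset_adjoin (by fin_cases i <;> simp))
  have hint : φ.IsIntegral := by
    intro r
    have hmem : r ∈ integralClosure A R := by
      refine Algebra.adjoin_le ?_ (hadj r)
      rintro x hx
      simp only [Set.mem_insert_iff, Set.mem_singleton_iff] at hx
      rcases hx with rfl | rfl | rfl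
      exacts [hqx0, hqx1, hqx2]
    exact hmem
  refine ⟨hinj, hint, ?_⟩
  intro M _ _ e
  -- the minimal prime (x,y) of R
  haveI hsp : (Ideal.span {X 0, X 1} : Ideal (MvPolynomial (Fin 3) k)).IsPrime := span01_prime
  set P : PrimeSpectrum R :=
    ⟨Ideal.map q (Ideal.span {X 0, X 1}),
      Ideal.map_isPrime_of_surjective hq (by rw [hker]; exact inf_le_left)⟩ with hPdef
  have hcomapP : Ideal.comap q P.asIdeal = Ideal.span {X 0, X 1} := by
    show Ideal.comap q (Ideal.map q _) = _
    rw [Ideal.comap_map_of_surjective q hq, ← RingHom.ker_eq_comap_bot, hker]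
    exact sup_eq_left.mpr inf_le_left
  have hminP : IsMin P := by
    intro y hy
    have hy' : y.asIdeal ≤ P.asIdeal := (PrimeSpectrum.asIdeal_le_asIdeal _ _).mpr hy
    haveI := y.2
    have hker_le : RingHom.ker q ≤ Ideal.comap q y.asIdeal := by
      intro x hx
      rw [Ideal.mem_comap, RingHom.mem_ker.mp hx]
      exact Submodule.zero_mem _
    rw [hker] at hker_le
    rcases (Ideal.comap_isPrime q y.asIdeal).inf_le.mp hker_le with h | h
    · refine (PrimeSpectrum.asIdeal_le_asIdeal _ _).mp ?_
      calc P.asIdeal = Ideal.map q (Ideal.span {X 0, X 1}) := rfl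
        _ ≤ Ideal.map q (Ideal.comap q y.asIdeal) := Ideal.map_mono h
        _ = y.asIdeal := Ideal.map_comap_of_surjective q hq _
    · exfalso
      have h2 : (X 2 : MvPolynomial (Fin 3) k) ∈ Ideal.comap q P.asIdeal :=
        Ideal.comap_mono hy' (h (Ideal.subset_span rfl))
      rw [hcomapP] at h2
      exact X2_not_mem_span01 h2
  have hPheight : Order.height P = 0 := Order.height_eq_zero.mpr hminP
  have hqX1P : q (X 1) ∈ P.asIdeal :=
    Ideal.mem_map_of_mem q (Ideal.subset_span (by simp))
  -- A-side data
  have hdomA : IsDomain A :=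
    Function.Injective.isDomain (RingEquiv.ofBijective p ⟨hpinj, hp⟩).symm.toRingHom
      (RingEquiv.injective _)
  set Iv : Ideal A := Ideal.span {p (X 1)} with hIvdef
  have hIv_map : Iv = Ideal.map p (Ideal.span {X 1}) := by
    rw [hIvdef, Ideal.map_span, Set.image_singleton]
  haveI hX1prime : (Ideal.span {(X 1 : MvPolynomial (Fin 2) k)}).IsPrime :=
    (Ideal.span_singleton_prime (MvPolynomial.X_ne_zero _)).mpr prime_X1
  have hIvprime : Iv.IsPrime := by
    rw [hIv_map]
    exact Ideal.map_isPrime_of_surjective hp (by rw [hkerp]; exact bot_le)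
  have hvne : p (X 1) ≠ 0 := by
    intro h
    exact MvPolynomial.X_ne_zero _ (hpinj (show p (X 1) = p 0 by rw [map_zero, h]))
  set pv : PrimeSpectrum A := ⟨Iv, hIvprime⟩ with hpvdef
  have hbelow : ∀ y : PrimeSpectrum A, y < pv → IsMin y := by
    intro y hy
    have hlt : y.asIdeal < Iv :=
      lt_of_le_of_ne ((PrimeSpectrum.asIdeal_le_asIdeal _ _).mpr hy.le)
        (fun hEq => hy.ne (PrimeSpectrum.ext hEq))
    haveI := y.2
    have hle : Ideal.comap p y.asIdeal ≤ Ideal.span {X 1} := by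
      have hcm := Ideal.comap_mono (f := p) hlt.le
      rwa [hIv_map, Ideal.comap_map_of_surjective p hp, ← RingHom.ker_eq_comap_bot p, hkerp,
        sup_bot_eq] at hcm
    have hne2 : Ideal.comap p y.asIdeal ≠ Ideal.span {X 1} := by
      intro hEq
      apply hlt.ne
      rw [← Ideal.map_comap_of_surjective p hp y.asIdeal, hEq, ← hIv_map]
    have hbot : Ideal.comap p y.asIdeal = ⊥ :=
      prime_lt_span_X1 _ (Ideal.comap_isPrime p y.asIdeal) (lt_of_le_of_ne hle hne2)
    have hybot : y.asIdeal = ⊥ := by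
      rw [← Ideal.map_comap_of_surjective p hp y.asIdeal, hbot, Ideal.map_bot]
    intro z hz
    refine (PrimeSpectrum.asIdeal_le_asIdeal _ _).mp ?_
    rw [hybot]
    exact bot_le
  refine ⟨?_, ?_⟩
  · -- codim_A M = 1
    have hannA : Module.annihilator A M = Iv := by
      rw [e.annihilator_eq, Ideal.annihilator_quotient]
    show idealHeight (Module.annihilator A M) = 1
    rw [hannA]
    unfold idealHeight
    apply le_antisymm
    · refine le_trans (iInf₂_le pv le_rfl) ?_
      rw [← Nat.cast_one, Order.height_le_coe_iff]
      intro y hy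
      rw [Order.height_eq_zero.mpr (hbelow y hy)]
      exact_mod_cast zero_lt_one
    · refine le_iInf₂ fun P' hP' => ?_
      rw [ENat.one_le_iff_ne_zero]
      intro h0
      have hmin := Order.height_eq_zero.mp h0
      have hle' : P' ≤ (⟨⊥, Ideal.bot_prime⟩ : PrimeSpectrum A) :=
        hmin ((PrimeSpectrum.asIdeal_le_asIdeal _ _).mp bot_le)
      have hv : p (X 1) ∈ P'.asIdeal := hP' (Ideal.subset_span rfl)
      have : p (X 1) ∈ (⊥ : Ideal A) :=
        (PrimeSpectrum.asIdeal_le_asIdeal _ _).mpr hle' hv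
      exact hvne ((Submodule.mem_bot A).mp this)
  · -- codim_R (R ⊗[A] M) = 0
    have hannR : Module.annihilator R (R ⊗[A] M) ≤ P.asIdeal := by
      intro r hr
      have h0 : r • ((1 : R) ⊗ₜ[A] (e.symm 1)) = (0 : R ⊗[A] M) :=
        Module.mem_annihilator.mp hr _
      have h1 : (r ⊗ₜ[A] (e.symm 1) : R ⊗[A] M) = 0 := by
        rw [← h0, TensorProduct.smul_tmul', smul_eq_mul, mul_one]
      have h2 : tensorQuotEquivQuotSMul R Iv
          (LinearMap.lTensor R e.toLinearMap (r ⊗ₜ[A] (e.symm 1))) = 0 := by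
        rw [h1, map_zero, map_zero]
      rw [LinearMap.lTensor_tmul] at h2
      simp only [LinearEquiv.coe_coe, LinearEquiv.apply_symm_apply] at h2
      rw [← map_one (Ideal.Quotient.mk Iv), tensorQuotEquivQuotSMul_tmul_mk, one_smul] at h2
      have hmem : r ∈ (Iv • (⊤ : Submodule A R)) := (Submodule.Quotient.mk_eq_zero _).mp h2
      have hsub : (Iv • (⊤ : Submodule A R)) ≤ Submodule.restrictScalars A
          (P.asIdeal : Submodule R R) := by
        refine Submodule.smul_le.mpr ?_
        intro a ha x _
        have hsmul : a • x = φ a * x := by rw [Algebra.smul_def, halg]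
        have hφa : φ a ∈ P.asIdeal := by
          obtain ⟨c, hc⟩ := Ideal.mem_span_singleton.mp ha
          rw [hc, map_mul]
          refine Ideal.mul_mem_right _ _ ?_
          rw [hφp (X 1), hfX1]
          exact hqX1P
        show a • x ∈ P.asIdeal
        rw [hsmul]
        exact Ideal.mul_mem_right _ _ hφa
      exact hsub hmem
    show idealHeight (Module.annihilator R (R ⊗[A] M)) = 0
    unfold idealHeight
    refine le_antisymm ?_ zero_le
    refine le_trans (iInf₂_le P hannR) ?_
    rw [hPheight]
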